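/- The class of context-free languages is strictly contained in the class of languages generated by (returning or non-returning) PC grammar systems with two context-free components: L(CF) ⊊ L(X_2 CF) for X ∈ {PC, NPC}. -/

import Mathlib

/-- Symbols of a PC grammar system with `n` components: nonterminals from `N`,
terminals from `T`, and query symbols `Q_i` for `i : Fin n`. -/
inductive PCSym (N T : Type) (n : ℕ) where
  | nt (A : N) : PCSym N T n
  | tm (a : T) : PCSym N T n
  | qr (i : Fin n) : PCSym N T n

/-- A context-free component grammar: a finite list of context-free rules
`A → w` with `w` over `N ∪ T ∪ K`, and an axiom (start symbol). -/
structure PCComponent (N T : Type) (n : ℕ) where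
  rules : List (N × List (PCSym N T n))
  start : N

/-- A PC grammar system with `n` context-free components and a master. -/
structure PCGS (N T : Type) (n : ℕ) where
  comp : Fin n → PCComponent N T n
  master : Fin n

namespace PCGS

variable {N T : Type} {n : ℕ}

/-- The string contains at least one query symbol. -/
def hasQuery (x : List (PCSym N T n)) : Prop := ∃ i : Fin n, PCSym.qr i ∈ x

/-- The string is a terminal word (all symbols are terminals). -/
def isTerminalWord (x : List (PCSym N T n)) : Prop := ∀ s ∈ x, ∃ a : T, s = PCSym.tm a

/-- One context-free rewriting step of a component grammar. -/
def Rewrite (G : PCComponent N T n) (x y : List (PCSym N T n)) : Prop :=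
  ∃ (u v : List (PCSym N T n)) (A : N) (w : List (PCSym N T n)),
    x = u ++ PCSym.nt A :: v ∧ (A, w) ∈ G.rules ∧ y = u ++ w ++ v

/-- Replace every query symbol `Q_i` in `x` by the string of component `i`. -/
def subst (c : Fin n → List (PCSym N T n)) (x : List (PCSym N T n)) : List (PCSym N T n) :=
  x.flatMap fun s => match s with
    | PCSym.qr i => c i
    | s => [s]

/-- All queries of component `i` can be answered: the queried components'
strings are query-free. -/
def answered (c : Fin n → List (PCSym N T n)) (i : Fin n) : Prop :=
  hasQuery (c i) ∧ ∀ j : Fin n, PCSym.qr j ∈ c i → ¬ hasQuery (c j)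

/-- Synchronized rewriting step: no query symbol occurs; every component with a
non-terminal string performs one context-free step, terminal strings stay. -/
def RewriteStep (Γ : PCGS N T n) (c c' : Fin n → List (PCSym N T n)) : Prop :=
  (∀ i, ¬ hasQuery (c i)) ∧
  ∀ i, (isTerminalWord (c i) ∧ c' i = c i) ∨
       (¬ isTerminalWord (c i) ∧ Rewrite (Γ.comp i) (c i) (c' i))

/-- Component `j` was successfully queried by some component. -/
def Reset (c : Fin n → List (PCSym N T n)) (j : Fin n) : Prop :=
  ∃ i, answered c i ∧ PCSym.qr j ∈ c i

/-- Communication step. In returning mode successfully queried components reset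
to their axioms; in non-returning mode they keep their strings. -/
def CommStep (returning : Bool) (Γ : PCGS N T n) (c c' : Fin n → List (PCSym N T n)) : Prop :=
  (∃ i, hasQuery (c i)) ∧
  ∀ i,
    (answered c i ∧ c' i = subst c (c i)) ∨
    (hasQuery (c i) ∧ ¬ answered c i ∧ c' i = c i) ∨
    (¬ hasQuery (c i) ∧ returning = true ∧ Reset c i ∧ c' i = [PCSym.nt (Γ.comp i).start]) ∨
    (¬ hasQuery (c i) ∧ (returning = false ∨ ¬ Reset c i) ∧ c' i = c i)

/-- A direct derivation step of a PC grammar system. -/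
def Step (returning : Bool) (Γ : PCGS N T n) (c c' : Fin n → List (PCSym N T n)) : Prop :=
  RewriteStep Γ c c' ∨ CommStep returning Γ c c'

/-- The initial configuration `(S_1, …, S_n)`. -/
def initConfig (Γ : PCGS N T n) : Fin n → List (PCSym N T n) :=
  fun i => [PCSym.nt (Γ.comp i).start]

/-- The language generated by the master component of `Γ`. -/
def language (returning : Bool) (Γ : PCGS N T n) : Language T :=
  { w | ∃ c, Relation.ReflTransGen (Step returning Γ) (initConfig Γ) c ∧
        c Γ.master = w.map PCSym.tm }

end PCGS

/-- The class of languages generated by non-returning PC grammar systems with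
at most `n` context-free components. -/
def NPCLang (n : ℕ) (T : Type) : Set (Language T) :=
  { L | ∃ (k : ℕ) (_ : k ≤ n) (N : Type) (_ : Finite N) (Γ : PCGS N T k),
      PCGS.language false Γ = L }

/-- The class of languages generated by returning PC grammar systems with
at most `n` context-free components. -/
def PCLangR (n : ℕ) (T : Type) : Set (Language T) :=
  { L | ∃ (k : ℕ) (_ : k ≤ n) (N : Type) (_ : Finite N) (Γ : PCGS N T k),
      PCGS.language true Γ = L }



namespace CFPump

/-- Parse trees: a node with a nonterminal label and children that are
terminal leaves or subtrees. -/
inductive PT (T N : Type) : Type where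
  | node (A : N) (children : List (T ⊕ PT T N)) : PT T N

namespace PT
variable {T N : Type}

def root : PT T N → N
  | node A _ => A

mutual
def yield : PT T N → List T
  | node _ cs => yields cs
def yields : List (T ⊕ PT T N) → List T
  | [] => []
  | (Sum.inl a) :: cs => a :: yields cs
  | (Sum.inr t) :: cs => t.yield ++ yields cs
end

mutual
def size : PT T N → ℕ
  | node _ cs => sizes cs + 1
def sizes : List (T ⊕ PT T N) → ℕ
  | [] => 0
  | (Sum.inl _) :: cs => sizes cs + 1
  | (Sum.inr t) :: cs => t.size + sizes cs + 1
end

mutual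
def height : PT T N → ℕ
  | node _ cs => heights cs + 1
def heights : List (T ⊕ PT T N) → ℕ
  | [] => 0
  | (Sum.inl _) :: cs => heights cs
  | (Sum.inr t) :: cs => max t.height (heights cs)
end

@[simp] lemma root_node (A : N) (cs) : (node (T := T) A cs).root = A := rfl
@[simp] lemma yield_node (A : N) (cs) : (node (T := T) A cs).yield = yields cs := rfl
@[simp] lemma size_node (A : N) (cs) : (node (T := T) A cs).size = sizes cs + 1 := rfl
@[simp] lemma height_node (A : N) (cs) : (node (T := T) A cs).height = heights cs + 1 := rfl

@[simp] lemma yields_nil : yields ([] : List (T ⊕ PT T N)) = [] := rfl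
@[simp] lemma yields_cons_inl (a : T) (cs : List (T ⊕ PT T N)) :
    yields (Sum.inl a :: cs) = a :: yields cs := rfl
@[simp] lemma yields_cons_inr (t : PT T N) (cs) :
    yields (Sum.inr t :: cs) = t.yield ++ yields cs := rfl
@[simp] lemma sizes_cons_inl (a : T) (cs : List (T ⊕ PT T N)) :
    sizes (Sum.inl a :: cs) = sizes cs + 1 := rfl
@[simp] lemma sizes_cons_inr (t : PT T N) (cs) :
    sizes (Sum.inr t :: cs) = t.size + sizes cs + 1 := rfl

lemma yields_map_inl (w : List T) : yields (w.map (Sum.inl : T → T ⊕ PT T N)) = w := by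
  induction w with
  | nil => rfl
  | cons a l ih => simp [ih]

lemma yields_append (l₁ l₂ : List (T ⊕ PT T N)) :
    yields (l₁ ++ l₂) = yields l₁ ++ yields l₂ := by
  induction l₁ with
  | nil => simp
  | cons c l ih => rcases c with a | t <;> simp [ih]

lemma sizes_append (l₁ l₂ : List (T ⊕ PT T N)) :
    sizes (l₁ ++ l₂) = sizes l₁ + sizes l₂ := by
  induction l₁ with
  | nil => simp [sizes]
  | cons c l ih => rcases c with a | t <;> simp [ih] <;> omega

lemma size_le_sizes {t : PT T N} {cs : List (T ⊕ PT T N)} (h : Sum.inr t ∈ cs) :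
    t.size < sizes cs := by
  induction cs with
  | nil => simp at h
  | cons c l ih =>
    rcases c with a | s
    · simp at h; have := ih h; simp; omega
    · rcases List.mem_cons.mp h with h | h
      · cases h; simp
      · have := ih h; simp; omega

lemma height_le_heights {t : PT T N} {cs : List (T ⊕ PT T N)} (h : Sum.inr t ∈ cs) :
    t.height ≤ heights cs := by
  induction cs with
  | nil => simp at h
  | cons c l ih =>
    rcases c with a | s
    · simp at h; simpa [heights] using ih h
    · rcases List.mem_cons.mp h with h | h
      · cases h; simp [heights]
      · have := ih h; simp [heights]; omega

lemma heights_exists_mem {cs : List (T ⊕ PT T N)} (h : heights cs ≠ 0) :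
    ∃ t : PT T N, Sum.inr t ∈ cs ∧ t.height = heights cs := by
  induction cs with
  | nil => simp [heights] at h
  | cons c l ih =>
    rcases c with a | s
    · simp only [heights] at h ⊢
      obtain ⟨t, ht, he⟩ := ih h
      exact ⟨t, by simp [ht], he⟩
    · simp only [heights] at h ⊢
      rcases le_total (heights l) s.height with hle | hle
      · exact ⟨s, by simp, (max_eq_left hle).symm⟩
      · rcases Nat.eq_zero_or_pos (heights l) with h0 | hpos
        · exact ⟨s, by simp, by omega⟩
        · obtain ⟨t, ht, he⟩ := ih (by omega)
          exact ⟨t, by simp [ht], by omega⟩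

end PT

variable {T : Type}

open Symbol in
/-- The symbol corresponding to a child. -/
def csym {N : Type} (c : T ⊕ PT T N) : Symbol T N :=
  Sum.elim Symbol.terminal (fun t => Symbol.nonterminal t.root) c

@[simp] lemma csym_inl {N : Type} (a : T) : csym (N := N) (Sum.inl a) = Symbol.terminal a := rfl
@[simp] lemma csym_inr {N : Type} (t : PT T N) :
    csym (Sum.inr t) = Symbol.nonterminal t.root := rfl

variable {g : ContextFreeGrammar.{0} T}

/-- Validity of a parse tree with respect to a grammar. -/
inductive Valid (g : ContextFreeGrammar.{0} T) : PT T g.NT → Prop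
  | node {A : g.NT} {cs : List (T ⊕ PT T g.NT)} (r : ContextFreeRule T g.NT)
      (hr : r ∈ g.rules) (hin : r.input = A) (hout : r.output = cs.map csym)
      (hc : ∀ c ∈ cs, ∀ t, c = Sum.inr t → Valid g t) : Valid g (PT.node A cs)

lemma yields_derives {cs : List (T ⊕ PT T g.NT)}
    (h : ∀ c ∈ cs, ∀ t : PT T g.NT, c = Sum.inr t →
      g.Derives [Symbol.nonterminal t.root] (t.yield.map Symbol.terminal)) :
    g.Derives (cs.map csym) ((PT.yields cs).map Symbol.terminal) := by
  induction cs with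
  | nil => simpa using Relation.ReflTransGen.refl
  | cons c l ih =>
    have ih' := ih (fun c hc => h c (List.mem_cons_of_mem _ hc))
    rcases c with a | t
    · simpa using ih'.append_left [Symbol.terminal a]
    · have h1 := h (Sum.inr t) (List.mem_cons_self) t rfl
      have h2 := h1.append_right (l.map csym)
      have h3 := ih'.append_left (t.yield.map Symbol.terminal)
      simpa using h2.trans h3

lemma Valid.derives {t : PT T g.NT} (hv : Valid g t) :
    g.Derives [Symbol.nonterminal t.root] (t.yield.map Symbol.terminal) := by
  induction hv with
  | node r hr hin hout hc ih =>
    refine Relation.ReflTransGen.head ⟨r, hr, ?_⟩ (yields_derives ih)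
    simpa [hin, hout] using ContextFreeRule.Rewrites.input_output (r := r)

/-- `x` is a sentential form that can be organized as a forest with yield `w`. -/
def ForestOf (g : ContextFreeGrammar.{0} T) (x : List (Symbol T g.NT)) (w : List T) : Prop :=
  ∃ cs : List (T ⊕ PT T g.NT), x = cs.map csym ∧ w = PT.yields cs ∧
    ∀ c ∈ cs, ∀ t, c = Sum.inr t → Valid g t

lemma forestOf_of_derives {x : List (Symbol T g.NT)} {w : List T}
    (h : g.Derives x (w.map Symbol.terminal)) : ForestOf g x w := by
  induction h using Relation.ReflTransGen.head_induction_on with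
  | refl =>
    exact ⟨w.map Sum.inl, by simp [Function.comp], (PT.yields_map_inl w).symm, by simp⟩
  | head hstep _ ih =>
    obtain ⟨r, hr, hrw⟩ := hstep
    obtain ⟨p, q, hx, hy⟩ := hrw.exists_parts
    obtain ⟨cs, hcs, hw, hval⟩ := ih
    rw [hy, List.append_assoc] at hcs
    obtain ⟨cs₁, cs₂₃, hsplit, hmap₁, hmap₂₃⟩ := List.map_eq_append_iff.mp (hcs.symm)
    obtain ⟨cs₂, cs₃, hsplit', hmap₂, hmap₃⟩ := List.map_eq_append_iff.mp hmap₂₃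
    subst hsplit hsplit'
    refine ⟨cs₁ ++ Sum.inr (PT.node r.input cs₂) :: cs₃, ?_, ?_, ?_⟩
    · rw [hx]; simp [← hmap₁, ← hmap₃]
    · rw [hw]
      simp [PT.yields_append]
    · intro c hc t hct
      rcases List.mem_append.mp hc with hc | hc
      · exact hval c (by simp [hc]) t hct
      · rcases List.mem_cons.mp hc with hc | hc
        · subst hc
          cases hct
          refine Valid.node r hr rfl hmap₂.symm ?_
          intro c hc t hct
          exact hval c (by simp [hc]) t hct
        · exact hval c (by simp [hc]) t hct


/-! ### Height bound -/

def maxOut (g : ContextFreeGrammar.{0} T) : ℕ := g.rules.sup fun r => r.output.length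

lemma yields_len_le {cs : List (T ⊕ PT T g.NT)} {M : ℕ} (hM : 1 ≤ M)
    (h : ∀ c ∈ cs, ∀ t : PT T g.NT, c = Sum.inr t → t.yield.length ≤ M) :
    (PT.yields cs).length ≤ cs.length * M := by
  induction cs with
  | nil => simp
  | cons c l ih =>
    have ih' := ih (fun c hc => h c (List.mem_cons_of_mem _ hc))
    rcases c with a | t
    · simp only [PT.yields_cons_inl, List.length_cons]
      have : (l.length + 1) * M = l.length * M + M := by ring
      omega
    · have h1 := h (Sum.inr t) (List.mem_cons_self) t rfl
      simp only [PT.yields_cons_inr, List.length_append, List.length_cons]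
      have : (l.length + 1) * M = l.length * M + M := by ring
      omega

lemma yield_len_le {t : PT T g.NT} (hv : Valid g t) :
    t.yield.length ≤ (maxOut g + 2) ^ t.height := by
  induction hv with
  | @node A cs r hr hin hout hc ih =>
    have hB : 1 ≤ (maxOut g + 2) ^ PT.heights cs := Nat.one_le_pow _ _ (by omega)
    have hlen : cs.length ≤ maxOut g + 2 := by
      have : r.output.length ≤ maxOut g := Finset.le_sup (f := fun r => r.output.length) hr
      have : r.output.length = cs.length := by rw [hout, List.length_map]
      omega
    have hbd : (PT.yields cs).length ≤ cs.length * (maxOut g + 2) ^ PT.heights cs := by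
      refine yields_len_le hB ?_
      intro c hcmem t hct
      calc t.yield.length ≤ (maxOut g + 2) ^ t.height := ih c hcmem t hct
        _ ≤ (maxOut g + 2) ^ PT.heights cs :=
          Nat.pow_le_pow_right (by omega) (PT.height_le_heights (hct ▸ hcmem))
    calc (PT.node A cs).yield.length = (PT.yields cs).length := by simp
      _ ≤ cs.length * (maxOut g + 2) ^ PT.heights cs := hbd
      _ ≤ (maxOut g + 2) * (maxOut g + 2) ^ PT.heights cs := Nat.mul_le_mul_right _ hlen
      _ = (maxOut g + 2) ^ (PT.node A cs).height := by
          simp [pow_succ]; ring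

/-! ### Subtrees and spines -/

def ChildOf {N : Type} (a b : PT T N) : Prop :=
  ∃ (A : N) (cs : List (T ⊕ PT T N)), a = PT.node A cs ∧ Sum.inr b ∈ cs

inductive Sub {N : Type} : PT T N → PT T N → Prop
  | refl (t) : Sub t t
  | step {A : N} {cs : List (T ⊕ PT T N)} {t' t'' : PT T N}
      (hm : Sum.inr t' ∈ cs) (h : Sub t' t'') : Sub (PT.node A cs) t''

lemma sub_of_transGen {N : Type} {a b : PT T N} (h : Relation.TransGen ChildOf a b) :
    Sub a b := by
  induction h using Relation.TransGen.head_induction_on with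
  | single h => obtain ⟨A, cs, rfl, hm⟩ := h; exact Sub.step hm (Sub.refl _)
  | head h _ ih => obtain ⟨A, cs, rfl, hm⟩ := h; exact Sub.step hm ih

lemma size_lt_of_transGen {N : Type} {a b : PT T N} (h : Relation.TransGen ChildOf a b) :
    b.size < a.size := by
  induction h with
  | single h => obtain ⟨A, cs, rfl, hm⟩ := h; have := PT.size_le_sizes hm; simp; omega
  | tail _ h ih =>
    obtain ⟨A, cs, rfl, hm⟩ := h
    have := PT.size_le_sizes hm
    simp at ih ⊢; omega

lemma sub_valid {a b : PT T g.NT} (h : Sub a b) (hv : Valid g a) : Valid g b := by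
  induction h with
  | refl => exact hv
  | step hm _ ih => cases hv with | node r hr hin hout hc => exact ih (hc _ hm _ rfl)

lemma chain'_mem_transGen {α : Type*} {R : α → α → Prop} :
    ∀ {l : List α} {a b : α}, List.Chain' R (a :: l) → b ∈ l → Relation.TransGen R a b := by
  intro l
  induction l with
  | nil => intro a b _ hb; simp at hb
  | cons c l' ih =>
    intro a b hch hb
    rw [List.Chain', List.isChain_cons_cons] at hch
    rcases List.mem_cons.mp hb with rfl | hb
    · exact Relation.TransGen.single hch.1
    · exact Relation.TransGen.head hch.1 (ih hch.2 hb)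

lemma chain'_sublist_transGen {α : Type*} {R : α → α → Prop} :
    ∀ {l : List α} {a b : α}, List.Chain' R l → List.Sublist [a, b] l → Relation.TransGen R a b := by
  intro l
  induction l with
  | nil => intro a b _ hs; exact absurd (hs.length_le) (by simp)
  | cons c l' ih =>
    intro a b hch hs
    cases hs with
    | cons _ hs => exact ih hch.tail hs
    | cons_cons _ hs =>
      exact chain'_mem_transGen hch (hs.subset (by simp))

lemma exists_spine {t : PT T g.NT} (hv : Valid g t) :
    ∃ ts : List (PT T g.NT), ts.length = t.height ∧ ts.head? = some t ∧
      List.Chain' ChildOf ts ∧ ∀ s ∈ ts, Valid g s := by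
  induction hv with
  | @node A cs r hr hin hout hc ih =>
    by_cases h0 : PT.heights cs = 0
    · refine ⟨[PT.node A cs], by simp [h0], rfl, List.isChain_singleton _, ?_⟩
      intro s hs
      rcases List.mem_singleton.mp hs with rfl
      exact Valid.node r hr hin hout hc
    · obtain ⟨t', hm, hh⟩ := PT.heights_exists_mem h0
      obtain ⟨ts', h1, h2, h3, h4⟩ := ih _ hm _ rfl
      refine ⟨PT.node A cs :: ts', by simp [h1, hh], rfl, ?_, ?_⟩
      · refine List.isChain_cons.mpr ⟨?_, h3⟩
        intro b hb
        rw [h2] at hb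
        cases hb
        exact ⟨A, cs, rfl, hm⟩
      · intro s hs
        rcases List.mem_cons.mp hs with rfl | hs
        · exact Valid.node r hr hin hout hc
        · exact h4 s hs

/-! ### Decomposition along a subtree -/

lemma sub_decomp {t t' : PT T g.NT} (hsub : Sub t t') :
    Valid g t →
    ∃ u z : List T, t.yield = u ++ t'.yield ++ z ∧
      g.Derives [Symbol.nonterminal t.root]
        (u.map Symbol.terminal ++ [Symbol.nonterminal t'.root] ++ z.map Symbol.terminal) ∧
      ∀ s : PT T g.NT, s.root = t'.root → Valid g s →
        ∃ t2 : PT T g.NT, Valid g t2 ∧ t2.root = t.root ∧ t2.yield = u ++ s.yield ++ z ∧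
          t2.size + t'.size = t.size + s.size := by
  induction hsub with
  | refl t =>
    intro _
    refine ⟨[], [], by simp, by simpa using Relation.ReflTransGen.refl, ?_⟩
    intro s hroot hvs
    exact ⟨s, hvs, hroot, by simp, by omega⟩
  | @step A cs tc t' hm hsub ih =>
    intro hv
    cases hv with
    | node r hr hin hout hc =>
    obtain ⟨u', z', hy, hder, hrep⟩ := ih (hc _ hm _ rfl)
    obtain ⟨l, rr, rfl⟩ := List.append_of_mem hm
    refine ⟨PT.yields l ++ u', z' ++ PT.yields rr, ?_, ?_, ?_⟩
    · simp [PT.yields_append, hy]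
    · -- derivation
      have hstep : g.Produces [Symbol.nonterminal (PT.node A (l ++ Sum.inr tc :: rr)).root]
          ((l ++ Sum.inr tc :: rr).map csym) := by
        refine ⟨r, hr, ?_⟩
        simpa [hin, hout] using ContextFreeRule.Rewrites.input_output (r := r)
      have hvl : ∀ c ∈ l, ∀ tt : PT T g.NT, c = Sum.inr tt →
          g.Derives [Symbol.nonterminal tt.root] (tt.yield.map Symbol.terminal) :=
        fun c hcm tt hct => (hc c (by simp [hcm]) tt hct).derives
      have hvr : ∀ c ∈ rr, ∀ tt : PT T g.NT, c = Sum.inr tt →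
          g.Derives [Symbol.nonterminal tt.root] (tt.yield.map Symbol.terminal) :=
        fun c hcm tt hct => (hc c (by simp [hcm]) tt hct).derives
      have d1 : g.Derives ((l ++ Sum.inr tc :: rr).map csym)
          ((PT.yields l).map Symbol.terminal ++
            (Symbol.nonterminal tc.root :: rr.map csym)) := by
        have := (yields_derives hvl).append_right (Symbol.nonterminal tc.root :: rr.map csym)
        simpa using this
      have d2 : g.Derives
          ((PT.yields l).map Symbol.terminal ++ (Symbol.nonterminal tc.root :: rr.map csym))
          ((PT.yields l).map Symbol.terminal ++
            ((u'.map Symbol.terminal ++ [Symbol.nonterminal t'.root] ++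
              z'.map Symbol.terminal) ++ rr.map csym)) := by
        exact ((hder.append_right (rr.map csym)).append_left _)
      have d3 : g.Derives
          ((PT.yields l).map Symbol.terminal ++
            ((u'.map Symbol.terminal ++ [Symbol.nonterminal t'.root] ++
              z'.map Symbol.terminal) ++ rr.map csym))
          ((PT.yields l).map Symbol.terminal ++
            ((u'.map Symbol.terminal ++ [Symbol.nonterminal t'.root] ++
              z'.map Symbol.terminal) ++ (PT.yields rr).map Symbol.terminal)) := by
        exact ((yields_derives hvr).append_left _).append_left _
      have := (hstep.trans_derives (d1.trans (d2.trans d3)))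
      simpa [List.map_append, List.append_assoc] using this
    · intro s hroot hvs
      obtain ⟨t2', hval2, hroot2, hyield2, hsize2⟩ := hrep s hroot hvs
      refine ⟨PT.node A (l ++ Sum.inr t2' :: rr), ?_, by simp, ?_, ?_⟩
      · refine Valid.node r hr hin ?_ ?_
        · rw [hout]
          simp [hroot2]
        · intro c hcm tt hct
          rcases List.mem_append.mp hcm with hcm | hcm
          · exact hc c (by simp [hcm]) tt hct
          · rcases List.mem_cons.mp hcm with rfl | hcm
            · cases hct; exact hval2
            · exact hc c (by simp [hcm]) tt hct
      · simp [PT.yields_append, hyield2, hy]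
      · simp only [PT.size_node, PT.sizes_append, PT.sizes_cons_inr] at *
        omega

/-! ### The weak pumping lemma -/

theorem cfg_weak_pumping (g : ContextFreeGrammar.{0} T) :
    ∃ p : ℕ, 1 ≤ p ∧ ∀ w ∈ g.language, p ≤ w.length →
      ∃ u v x y z : List T, w = u ++ v ++ x ++ y ++ z ∧ v ++ y ≠ [] ∧
        u ++ v ++ v ++ x ++ y ++ y ++ z ∈ g.language := by
  classical
  set K := (g.rules.image fun r => r.input).card with hK
  refine ⟨(maxOut g + 2) ^ (K + 2), Nat.one_le_pow _ _ (by omega), ?_⟩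
  intro w hw hlen
  rw [ContextFreeGrammar.mem_language_iff] at hw
  obtain ⟨cs, hcs, hyw, hval⟩ := forestOf_of_derives hw
  -- extract the root tree
  have : ∃ t : PT T g.NT, Valid g t ∧ t.root = g.initial ∧ t.yield = w := by
    obtain ⟨c, rfl⟩ : ∃ c, cs = [c] := by
      rcases cs with _ | ⟨c, _ | ⟨d, l⟩⟩
      · simp at hcs
      · exact ⟨c, rfl⟩
      · simp at hcs
    rcases c with a | t
    · simp at hcs
    · refine ⟨t, hval _ (by simp) t rfl, ?_, by simpa using hyw.symm⟩
      simp at hcs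
      exact hcs.symm
  have hex : ∃ n, ∃ t : PT T g.NT, (Valid g t ∧ t.root = g.initial ∧ t.yield = w) ∧
      t.size = n := by
    obtain ⟨t, ht⟩ := this
    exact ⟨t.size, t, ht, rfl⟩
  obtain ⟨t, ⟨hvt, hroott, hyt⟩, hsizet⟩ := Nat.find_spec hex
  -- height is large
  have hht : K + 2 ≤ t.height := by
    have h1 : (maxOut g + 2) ^ (K + 2) ≤ (maxOut g + 2) ^ t.height := by
      calc (maxOut g + 2) ^ (K + 2) ≤ w.length := hlen
        _ = t.yield.length := by rw [hyt]
        _ ≤ (maxOut g + 2) ^ t.height := yield_len_le hvt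
    exact (Nat.pow_le_pow_iff_right (by omega)).mp h1
  obtain ⟨ts, hlents, hheadts, hchain, hvalts⟩ := exists_spine hvt
  -- find a repeated root along the spine
  have hnotnodup : ¬ (ts.map PT.root).Nodup := by
    intro hnd
    have hsub : (ts.map PT.root).toFinset ⊆ g.rules.image fun r => r.input := by
      intro A hA
      rw [List.mem_toFinset] at hA
      obtain ⟨s, hs, rfl⟩ := List.mem_map.mp hA
      cases hvalts s hs with
      | node r hr hin hout hc => exact Finset.mem_image.mpr ⟨r, hr, by simpa using hin⟩
    have := Finset.card_le_card hsub
    rw [List.toFinset_card_of_nodup hnd] at this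
    simp only [List.length_map] at this
    omega
  obtain ⟨A, hdup⟩ := List.exists_duplicate_iff_not_nodup.mpr hnotnodup
  have hsl : List.Sublist [A, A] (ts.map PT.root) := List.duplicate_iff_sublist.mp hdup
  obtain ⟨l2, hl2sub, hl2map⟩ := List.sublist_map_iff.mp hsl
  obtain ⟨t₁, t₂, rfl⟩ : ∃ t₁ t₂, l2 = [t₁, t₂] := by
    rcases l2 with _ | ⟨t₁, _ | ⟨t₂, _ | ⟨t₃, l⟩⟩⟩ <;> simp at hl2map
    exact ⟨t₁, t₂, rfl⟩
  have hroot12 : t₁.root = t₂.root := by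
    simp at hl2map; rw [← hl2map.1, ← hl2map.2]
  have htg : Relation.TransGen ChildOf t₁ t₂ := chain'_sublist_transGen hchain hl2sub
  have ht1mem : t₁ ∈ ts := hl2sub.subset (by simp)
  -- Sub t t₁
  have hsubt1 : Sub t t₁ := by
    obtain ⟨ts', rfl⟩ : ∃ ts', ts = t :: ts' := by
      cases ts with
      | nil => simp at hheadts
      | cons a l => exact ⟨l, by simpa using (by simpa using hheadts : a = t) ▸ rfl⟩
    rcases List.mem_cons.mp ht1mem with rfl | hmem
    · exact Sub.refl _
    · exact sub_of_transGen (chain'_mem_transGen hchain hmem)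
  have hvt1 : Valid g t₁ := sub_valid hsubt1 hvt
  have hsubt12 : Sub t₁ t₂ := sub_of_transGen htg
  have hvt2 : Valid g t₂ := sub_valid hsubt12 hvt1
  obtain ⟨u, z, hyuz, hderuz, hrep⟩ := sub_decomp hsubt1 hvt
  obtain ⟨v, y, hyvy, hdervy, _⟩ := sub_decomp hsubt12 hvt1
  refine ⟨u, v, t₂.yield, y, z, ?_, ?_, ?_⟩
  · rw [← hyt, hyuz, hyvy]; simp [List.append_assoc]
  · -- nonemptiness via minimality
    intro hvy
    obtain ⟨rfl, rfl⟩ := List.append_eq_nil_iff.mp hvy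
    have hyeq : t₁.yield = t₂.yield := by simpa using hyvy
    obtain ⟨t2, hvalt2, hroott2, hyieldt2, hsizet2⟩ := hrep t₂ hroot12.symm hvt2
    have hlt : t2.size < t.size := by
      have := size_lt_of_transGen htg
      omega
    exact Nat.find_min hex (hsizet ▸ hlt)
      ⟨t2, ⟨hvalt2, by rw [hroott2, hroott], by rw [hyieldt2, ← hyeq, ← hyuz, hyt]⟩, rfl⟩
  · -- pumped word in the language
    rw [ContextFreeGrammar.mem_language_iff]
    have e0 : g.Derives [Symbol.nonterminal g.initial]
        (u.map Symbol.terminal ++ [Symbol.nonterminal t₁.root] ++ z.map Symbol.terminal) := by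
      rw [← hroott]; exact hderuz
    have e1 : g.Derives [Symbol.nonterminal t₁.root]
        (v.map Symbol.terminal ++ [Symbol.nonterminal t₁.root] ++ y.map Symbol.terminal) := by
      have := hdervy; rw [← hroot12] at this; exact this
    have e2 : g.Derives [Symbol.nonterminal t₁.root] (t₂.yield.map Symbol.terminal) := by
      rw [hroot12]; exact hvt2.derives
    have e3 : g.Derives (v.map Symbol.terminal ++ [Symbol.nonterminal t₁.root] ++
        y.map Symbol.terminal)
        (v.map Symbol.terminal ++ (v.map Symbol.terminal ++ [Symbol.nonterminal t₁.root] ++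
          y.map Symbol.terminal) ++ y.map Symbol.terminal) :=
      (e1.append_left _).append_right _
    have f : g.Derives (v.map Symbol.terminal ++ [Symbol.nonterminal t₁.root] ++
        y.map Symbol.terminal)
        (v.map Symbol.terminal ++ t₂.yield.map Symbol.terminal ++ y.map Symbol.terminal) :=
      (e2.append_left _).append_right _
    have e4 := (e1.trans e3).trans ((f.append_left (v.map Symbol.terminal)).append_right
      (y.map Symbol.terminal))
    have e5 := e0.trans ((e4.append_left (u.map Symbol.terminal)).append_right
      (z.map Symbol.terminal))
    simpa [List.map_append, List.append_assoc] using e5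

end CFPump


namespace L3sec

/-- The language `{aⁿbⁿcⁿ : n ≥ 1}` over the alphabet `Fin 3`. -/
def L3 : Language (Fin 3) :=
  { w | ∃ n : ℕ, 1 ≤ n ∧
      w = List.replicate n 0 ++ List.replicate n 1 ++ List.replicate n 2 }

lemma fin3_count_sum (l : List (Fin 3)) :
    l.count 0 + l.count 1 + l.count 2 = l.length := by
  induction l with
  | nil => simp
  | cons a l ih =>
    fin_cases a <;> simp [List.count_cons] <;> omega

lemma sorted_rep3 (m : ℕ) :
    List.Pairwise (· ≤ ·) ((List.replicate m (0 : Fin 3) ++ List.replicate m 1)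
      ++ List.replicate m 2) := by
  rw [List.pairwise_append]
  refine ⟨?_, List.pairwise_replicate.mpr (by simp), ?_⟩
  · rw [List.pairwise_append]
    refine ⟨List.pairwise_replicate.mpr (by simp),
      List.pairwise_replicate.mpr (by simp), ?_⟩
    intro a ha b hb
    rw [List.eq_of_mem_replicate ha, List.eq_of_mem_replicate hb]
    decide
  · intro a ha b hb
    rw [List.mem_append] at ha
    rw [List.eq_of_mem_replicate hb]
    rcases ha with ha | ha <;> rw [List.eq_of_mem_replicate ha] <;> decide

lemma const_of_double_pairwise {v : List (Fin 3)}
    (h : List.Pairwise (· ≤ ·) (v ++ v)) : ∀ a ∈ v, ∀ b ∈ v, a = b := by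
  rw [List.pairwise_append] at h
  intro a ha b hb
  exact le_antisymm (h.2.2 a ha b hb) (h.2.2 b hb a ha)

theorem L3_not_contextFree : ¬ L3.IsContextFree := by
  rintro ⟨g, hg⟩
  obtain ⟨p, hp1, hpump⟩ := CFPump.cfg_weak_pumping g
  rw [hg] at hpump
  have hwmem : (List.replicate p (0 : Fin 3) ++ List.replicate p 1 ++ List.replicate p 2) ∈ L3 :=
    ⟨p, hp1, rfl⟩
  obtain ⟨u, v, x, y, z, hsplit, hvy, hpumped⟩ := hpump _ hwmem (by simp)
  obtain ⟨m, hm1, heq⟩ := hpumped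
  have key : ∀ t : Fin 3, (List.replicate m (0 : Fin 3) ++ List.replicate m 1
      ++ List.replicate m 2).count t
      = (List.replicate p (0 : Fin 3) ++ List.replicate p 1 ++ List.replicate p 2).count t
        + v.count t + y.count t := by
    intro t
    have h1 : (u ++ v ++ v ++ x ++ y ++ y ++ z).count t
        = (u ++ v ++ x ++ y ++ z).count t + v.count t + y.count t := by
      simp [List.count_append]; ring
    rw [heq, ← hsplit] at h1
    exact h1
  have c0 : m = p + v.count 0 + y.count 0 := by
    have := key 0; simpa [List.count_append, List.count_replicate] using this
  have c1 : m = p + v.count 1 + y.count 1 := by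
    have := key 1
    simp only [List.count_append, List.count_replicate] at this
    simpa using this
  have c2 : m = p + v.count 2 + y.count 2 := by
    have := key 2
    simp only [List.count_append, List.count_replicate] at this
    simpa using this
  have hlenvy : 0 < v.length + y.length := by
    rcases v with _ | ⟨a, v'⟩
    · rcases y with _ | ⟨b, y'⟩
      · simp at hvy
      · simp
    · simp
  have hsumv := fin3_count_sum v
  have hsumy := fin3_count_sum y
  have hpos0 : 0 < v.count 0 + y.count 0 := by omega
  have hpos1 : 0 < v.count 1 + y.count 1 := by omega
  have hpos2 : 0 < v.count 2 + y.count 2 := by omega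
  have hmem : ∀ t : Fin 3, 0 < v.count t + y.count t → t ∈ v ∨ t ∈ y := by
    intro t ht
    by_contra hcon
    push_neg at hcon
    have hv0 : v.count t = 0 := List.count_eq_zero.mpr hcon.1
    have hy0 : y.count t = 0 := List.count_eq_zero.mpr hcon.2
    omega
  have hsorted : List.Pairwise (· ≤ ·) (u ++ v ++ v ++ x ++ y ++ y ++ z) := by
    rw [heq]; exact sorted_rep3 m
  have hvconst : ∀ a ∈ v, ∀ b ∈ v, a = b := by
    apply const_of_double_pairwise
    refine hsorted.sublist (List.IsInfix.sublist ⟨u, x ++ y ++ y ++ z, ?_⟩)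
    simp [List.append_assoc]
  have hyconst : ∀ a ∈ y, ∀ b ∈ y, a = b := by
    apply const_of_double_pairwise
    refine hsorted.sublist (List.IsInfix.sublist ⟨u ++ v ++ v ++ x, z, ?_⟩)
    simp [List.append_assoc]
  rcases hmem 0 hpos0 with h0 | h0 <;> rcases hmem 1 hpos1 with h1 | h1 <;>
    rcases hmem 2 hpos2 with h2 | h2
  · exact absurd (hvconst 0 h0 1 h1) (by decide)
  · exact absurd (hvconst 0 h0 1 h1) (by decide)
  · exact absurd (hvconst 0 h0 2 h2) (by decide)
  · exact absurd (hyconst 1 h1 2 h2) (by decide)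
  · exact absurd (hvconst 1 h1 2 h2) (by decide)
  · exact absurd (hyconst 0 h0 2 h2) (by decide)
  · exact absurd (hyconst 0 h0 1 h1) (by decide)
  · exact absurd (hyconst 0 h0 1 h1) (by decide)

end L3sec


namespace PCL3

abbrev Sym := PCSym (Fin 2) (Fin 3) 2

def Γ : PCGS (Fin 2) (Fin 3) 2 where
  comp := ![⟨[(0, [.tm 0, .nt 0]), (0, [.tm 0, .qr 1]), (1, [])], 0⟩,
            ⟨[(1, [.tm 1, .nt 1, .tm 2])], 1⟩]
  master := 0

@[simp] lemma comp0 : Γ.comp 0 =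
    ⟨[(0, [.tm 0, .nt 0]), (0, [.tm 0, .qr 1]), (1, [])], 0⟩ := rfl
@[simp] lemma comp1 : Γ.comp 1 = ⟨[(1, [.tm 1, .nt 1, .tm 2])], 1⟩ := rfl
@[simp] lemma master_eq : Γ.master = 0 := rfl

/-- Configurations in the growing phase. -/
def cA (t : ℕ) : Fin 2 → List Sym :=
  ![List.replicate t (.tm 0) ++ [.nt 0],
    List.replicate t (.tm 1) ++ .nt 1 :: List.replicate t (.tm 2)]

/-- Configuration just after the master introduced the query. -/
def cB (n : ℕ) : Fin 2 → List Sym :=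
  ![List.replicate n (.tm 0) ++ [.qr 1],
    List.replicate n (.tm 1) ++ .nt 1 :: List.replicate n (.tm 2)]

/-- Configuration after communication. -/
def cC (n s : ℕ) : Fin 2 → List Sym :=
  ![List.replicate n (.tm 0) ++ List.replicate n (.tm 1) ++ .nt 1 :: List.replicate n (.tm 2),
    List.replicate s (.tm 1) ++ .nt 1 :: List.replicate s (.tm 2)]

/-- Final configurations: the master holds a terminal word. -/
def cD (n s : ℕ) : Fin 2 → List Sym :=
  ![List.replicate n (.tm 0) ++ List.replicate n (.tm 1) ++ List.replicate n (.tm 2),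
    List.replicate s (.tm 1) ++ .nt 1 :: List.replicate s (.tm 2)]

def Inv (c : Fin 2 → List Sym) : Prop :=
  (∃ t, c = cA t) ∨ (∃ n, 1 ≤ n ∧ c = cB n) ∨ (∃ n s, 1 ≤ n ∧ c = cC n s) ∨
    (∃ n s, 1 ≤ n ∧ c = cD n s)

/-- `s` is a terminal symbol. -/
def isTm (s : Sym) : Prop := ∃ a : Fin 3, s = PCSym.tm a

lemma unique_split {α : Type} (P : α → Prop) :
    ∀ {l₁ m₁ : List α} {l₂ m₂ : List α} {x y : α},
      (∀ z ∈ l₁, P z) → (∀ z ∈ l₂, P z) → ¬P x → ¬P y →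
      l₁ ++ x :: l₂ = m₁ ++ y :: m₂ →
      l₁ = m₁ ∧ x = y ∧ l₂ = m₂ := by
  intro l₁
  induction l₁ with
  | nil =>
    intro m₁ l₂ m₂ x y _ hl₂ hx hy heq
    cases m₁ with
    | nil => simpa using heq
    | cons z m₁' =>
      simp only [List.nil_append, List.cons_append, List.cons.injEq] at heq
      obtain ⟨rfl, heq⟩ := heq
      exact absurd (hl₂ y (by simp [heq])) hy
  | cons z l₁' ih =>
    intro m₁ l₂ m₂ x y hl₁ hl₂ hx hy heq
    cases m₁ with
    | nil =>
      simp only [List.nil_append, List.cons_append, List.cons.injEq] at heq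
      obtain ⟨rfl, heq⟩ := heq
      exact absurd (hl₁ _ (List.mem_cons_self)) hy
    | cons z' m₁' =>
      simp only [List.cons_append, List.cons.injEq] at heq
      obtain ⟨rfl, heq⟩ := heq
      obtain ⟨h1, h2, h3⟩ := ih (fun w hw => hl₁ w (by simp [hw])) hl₂ hx hy heq
      exact ⟨by rw [h1], h2, h3⟩

lemma isTm_rep {a : Fin 3} {k : ℕ} : ∀ z ∈ List.replicate k (PCSym.tm a : Sym), isTm z := by
  intro z hz
  rw [List.eq_of_mem_replicate hz]
  exact ⟨a, rfl⟩

lemma isTm_append {l₁ l₂ : List Sym} (h₁ : ∀ z ∈ l₁, isTm z) (h₂ : ∀ z ∈ l₂, isTm z) :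
    ∀ z ∈ l₁ ++ l₂, isTm z := by
  intro z hz
  rcases List.mem_append.mp hz with h | h
  · exact h₁ z h
  · exact h₂ z h

lemma not_isTm_nt (A : Fin 2) : ¬ isTm (PCSym.nt A : Sym) := by rintro ⟨a, h⟩; cases h
lemma not_isTm_qr (i : Fin 2) : ¬ isTm (PCSym.qr i : Sym) := by rintro ⟨a, h⟩; cases h

lemma rep_snoc {α : Type} (k : ℕ) (a : α) (l : List α) :
    List.replicate k a ++ a :: l = List.replicate (k + 1) a ++ l := by
  rw [List.replicate_succ', List.append_assoc]
  rfl

/-- Rewriting analysis for the master in phase A. -/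
lemma rew0A {t : ℕ} {y : List Sym}
    (h : PCGS.Rewrite (Γ.comp 0) (List.replicate t (.tm 0) ++ [.nt 0]) y) :
    y = List.replicate (t+1) (.tm 0) ++ [.nt 0] ∨
      y = List.replicate (t+1) (.tm 0) ++ [.qr 1] := by
  obtain ⟨u, v, A, w, heq, hrule, rfl⟩ := h
  obtain ⟨rfl, hA, rfl⟩ := unique_split isTm isTm_rep (by simp) (not_isTm_nt 0)
    (not_isTm_nt A) heq
  cases hA
  simp only [comp0, List.mem_cons, Prod.mk.injEq, List.not_mem_nil, or_false] at hrule
  rcases hrule with ⟨_, rfl⟩ | ⟨_, rfl⟩ | ⟨h, _⟩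
  · left; rw [← rep_snoc]; simp
  · right; rw [← rep_snoc]; simp
  · exact absurd h (by decide)

/-- Rewriting analysis for the second component. -/
lemma rew1 {s : ℕ} {y : List Sym}
    (h : PCGS.Rewrite (Γ.comp 1)
      (List.replicate s (.tm 1) ++ .nt 1 :: List.replicate s (.tm 2)) y) :
    y = List.replicate (s+1) (.tm 1) ++ .nt 1 :: List.replicate (s+1) (.tm 2) := by
  obtain ⟨u, v, A, w, heq, hrule, rfl⟩ := h
  obtain ⟨rfl, hA, rfl⟩ := unique_split isTm isTm_rep isTm_rep (not_isTm_nt 1)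
    (not_isTm_nt A) heq
  cases hA
  simp only [comp1, List.mem_cons, Prod.mk.injEq, List.not_mem_nil, or_false] at hrule
  obtain ⟨_, rfl⟩ := hrule
  rw [← rep_snoc]
  simp [List.replicate_succ]

/-- Rewriting analysis for the master in phase C. -/
lemma rew0C {n : ℕ} {y : List Sym}
    (h : PCGS.Rewrite (Γ.comp 0)
      (List.replicate n (.tm 0) ++ List.replicate n (.tm 1) ++ .nt 1 ::
        List.replicate n (.tm 2)) y) :
    y = List.replicate n (.tm 0) ++ List.replicate n (.tm 1) ++ List.replicate n (.tm 2) := by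
  obtain ⟨u, v, A, w, heq, hrule, rfl⟩ := h
  obtain ⟨rfl, hA, rfl⟩ := unique_split isTm (isTm_append isTm_rep isTm_rep) isTm_rep
    (not_isTm_nt 1) (not_isTm_nt A) heq
  cases hA
  simp only [comp0, List.mem_cons, Prod.mk.injEq, List.not_mem_nil, or_false] at hrule
  rcases hrule with ⟨h, _⟩ | ⟨h, _⟩ | ⟨_, rfl⟩
  · exact absurd h (by decide)
  · exact absurd h (by decide)
  · simp

/-- No rewriting of an all-terminal string. -/
lemma rew_none {G : PCComponent (Fin 2) (Fin 3) 2} {l y : List Sym}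
    (hall : ∀ z ∈ l, isTm z) (h : PCGS.Rewrite G l y) : False := by
  obtain ⟨u, v, A, w, heq, _, _⟩ := h
  exact not_isTm_nt A (hall _ (by rw [heq]; simp))

lemma not_terminal_of_nt {l₁ l₂ : List Sym} {A : Fin 2} :
    ¬ PCGS.isTerminalWord (l₁ ++ .nt A :: l₂) := by
  intro h
  exact not_isTm_nt A (h _ (by simp))

lemma noquery_rep {a : Fin 3} {k : ℕ} {i : Fin 2} :
    (PCSym.qr i : Sym) ∉ List.replicate k (PCSym.tm a) := by
  intro h
  cases List.eq_of_mem_replicate h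

lemma noquery_A (t : ℕ) (i : Fin 2) : ¬ PCGS.hasQuery (cA t i) := by
  fin_cases i <;> simp [cA, PCGS.hasQuery]

lemma noquery_B1 (n : ℕ) : ¬ PCGS.hasQuery (cB n 1) := by
  simp [cB, PCGS.hasQuery]

lemma noquery_C (n s : ℕ) (i : Fin 2) : ¬ PCGS.hasQuery (cC n s i) := by
  fin_cases i <;> simp [cC, PCGS.hasQuery]

lemma noquery_D (n s : ℕ) (i : Fin 2) : ¬ PCGS.hasQuery (cD n s i) := by
  fin_cases i <;> simp [cD, PCGS.hasQuery]

lemma query_B0 (n : ℕ) : PCGS.hasQuery (cB n 0) := ⟨1, by simp [cB]⟩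

example : cA 3 0 = List.replicate 3 (.tm 0) ++ [.nt 0] := rfl
example : cA 3 1 = List.replicate 3 (.tm 1) ++ .nt 1 :: List.replicate 3 (.tm 2) := rfl

lemma not_term {l : List Sym} {A : Fin 2} (hA : PCSym.nt A ∈ l) :
    ¬ PCGS.isTerminalWord l := by
  intro h
  obtain ⟨a, ha⟩ := h _ hA
  cases ha

lemma fin2_ext {c d : Fin 2 → List Sym} (h0 : c 0 = d 0) (h1 : c 1 = d 1) : c = d := by
  funext i
  fin_cases i <;> assumption

lemma subst_rep (c : Fin 2 → List Sym) (k : ℕ) (a : Fin 3) :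
    PCGS.subst c (List.replicate k (.tm a)) = List.replicate k (.tm a) := by
  induction k with
  | zero => rfl
  | succ k ih => simp only [List.replicate_succ, PCGS.subst, List.flatMap_cons] at *; rw [ih]; rfl

lemma subst_append (c : Fin 2 → List Sym) (l₁ l₂ : List Sym) :
    PCGS.subst c (l₁ ++ l₂) = PCGS.subst c l₁ ++ PCGS.subst c l₂ := by
  unfold PCGS.subst; exact List.flatMap_append

lemma subst_qr (c : Fin 2 → List Sym) (i : Fin 2) : PCGS.subst c [.qr i] = c i := by
  simp [PCGS.subst]

lemma answered_B0 (n : ℕ) : PCGS.answered (cB n) 0 := by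
  refine ⟨query_B0 n, ?_⟩
  intro j hj
  have hj1 : j = 1 := by
    simp only [cB] at hj
    rcases List.mem_append.mp hj with h | h
    · exact absurd h noquery_rep
    · cases List.mem_singleton.mp h; rfl
  subst hj1
  exact noquery_B1 n

lemma inv_step {b : Bool} {c c' : Fin 2 → List Sym} (h : Inv c)
    (hs : PCGS.Step b Γ c c') : Inv c' := by
  rcases h with ⟨t, rfl⟩ | ⟨n, hn, rfl⟩ | ⟨n, s, hn, rfl⟩ | ⟨n, s, hn, rfl⟩
  · -- phase A
    rcases hs with ⟨hq, hrw⟩ | ⟨⟨i, hq⟩, _⟩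
    · rcases hrw 0 with ⟨hterm, _⟩ | ⟨_, hrew0⟩
      · exact absurd hterm (not_term (A := 0) (by simp [cA]))
      rcases hrw 1 with ⟨hterm, _⟩ | ⟨_, hrew1⟩
      · exact absurd hterm (not_term (A := 1) (by simp [cA]))
      have h1 : c' 1 = List.replicate (t+1) (.tm 1) ++ .nt 1 :: List.replicate (t+1) (.tm 2) :=
        rew1 hrew1
      rcases rew0A hrew0 with h0 | h0
      · exact Or.inl ⟨t + 1, fin2_ext h0 h1⟩
      · exact Or.inr (Or.inl ⟨t + 1, by omega, fin2_ext h0 h1⟩)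
    · exact absurd hq (noquery_A t i)
  · -- phase B
    rcases hs with ⟨hq, _⟩ | ⟨_, hcomm⟩
    · exact absurd (query_B0 n) (hq 0)
    · have hB0 := answered_B0 n
      have h0 : c' 0 = PCGS.subst (cB n) (cB n 0) := by
        rcases hcomm 0 with ⟨_, h⟩ | ⟨_, hna, _⟩ | ⟨hnq, _⟩ | ⟨hnq, _⟩
        · exact h
        · exact absurd hB0 hna
        · exact absurd (query_B0 n) hnq
        · exact absurd (query_B0 n) hnq
      have h0' : c' 0 = List.replicate n (.tm 0) ++ List.replicate n (.tm 1) ++ .nt 1 ::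
          List.replicate n (.tm 2) := by
        rw [h0]
        show PCGS.subst (cB n) (List.replicate n (PCSym.tm 0) ++ [PCSym.qr 1]) = _
        rw [subst_append, subst_rep, subst_qr]
        show List.replicate n (PCSym.tm 0) ++ (List.replicate n (PCSym.tm 1) ++ PCSym.nt 1 ::
          List.replicate n (PCSym.tm 2)) = _
        rw [List.append_assoc]
      rcases hcomm 1 with ⟨ha, _⟩ | ⟨hq, _, _⟩ | ⟨_, _, _, h1⟩ | ⟨_, _, h1⟩
      · exact absurd ha.1 (noquery_B1 n)
      · exact absurd hq (noquery_B1 n)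
      · refine Or.inr (Or.inr (Or.inl ⟨n, 0, hn, fin2_ext h0' ?_⟩))
        rw [h1]; rfl
      · exact Or.inr (Or.inr (Or.inl ⟨n, n, hn, fin2_ext h0' (by rw [h1]; rfl)⟩))
  · -- phase C
    rcases hs with ⟨hq, hrw⟩ | ⟨⟨i, hq⟩, _⟩
    · rcases hrw 0 with ⟨hterm, _⟩ | ⟨_, hrew0⟩
      · exact absurd hterm (not_term (A := 1) (by simp [cC]))
      rcases hrw 1 with ⟨hterm, _⟩ | ⟨_, hrew1⟩
      · exact absurd hterm (not_term (A := 1) (by simp [cC]))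
      exact Or.inr (Or.inr (Or.inr ⟨n, s + 1, hn, fin2_ext (rew0C hrew0) (rew1 hrew1)⟩))
    · exact absurd hq (noquery_C n s i)
  · -- phase D
    rcases hs with ⟨hq, hrw⟩ | ⟨⟨i, hq⟩, _⟩
    · have h0 : c' 0 = cD n s 0 := by
        rcases hrw 0 with ⟨_, h⟩ | ⟨_, hrew0⟩
        · exact h
        · exact absurd hrew0 (fun hr => rew_none
            (by show ∀ z ∈ List.replicate n (.tm 0) ++ List.replicate n (.tm 1) ++
                  List.replicate n (.tm 2), isTm z
                exact isTm_append (isTm_append isTm_rep isTm_rep) isTm_rep) hr)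
      rcases hrw 1 with ⟨hterm, _⟩ | ⟨_, hrew1⟩
      · exact absurd hterm (not_term (A := 1) (by simp [cD]))
      exact Or.inr (Or.inr (Or.inr ⟨n, s + 1, hn, fin2_ext h0 (rew1 hrew1)⟩))
    · exact absurd hq (noquery_D n s i)

lemma stepA (b : Bool) (t : ℕ) : PCGS.Step b Γ (cA t) (cA (t + 1)) := by
  refine Or.inl ⟨noquery_A t, ?_⟩
  intro i
  fin_cases i
  · refine Or.inr ⟨not_term (A := 0) (by simp [cA]), List.replicate t (.tm 0), [], 0,
      [.tm 0, .nt 0], rfl, by simp, ?_⟩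
    show cA (t+1) 0 = _
    rw [show cA (t+1) 0 = List.replicate (t+1) (.tm 0) ++ [.nt 0] from rfl, ← rep_snoc]
    simp
  · refine Or.inr ⟨not_term (A := 1) (by simp [cA]), List.replicate t (.tm 1),
      List.replicate t (.tm 2), 1, [.tm 1, .nt 1, .tm 2], rfl, by simp, ?_⟩
    show cA (t+1) 1 = _
    rw [show cA (t+1) 1 = List.replicate (t+1) (.tm 1) ++ .nt 1 ::
      List.replicate (t+1) (.tm 2) from rfl, ← rep_snoc]
    simp [List.replicate_succ]

lemma stepAB (b : Bool) (t : ℕ) : PCGS.Step b Γ (cA t) (cB (t + 1)) := by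
  refine Or.inl ⟨noquery_A t, ?_⟩
  intro i
  fin_cases i
  · refine Or.inr ⟨not_term (A := 0) (by simp [cA]), List.replicate t (.tm 0), [], 0,
      [.tm 0, .qr 1], rfl, by simp, ?_⟩
    show cB (t+1) 0 = _
    rw [show cB (t+1) 0 = List.replicate (t+1) (.tm 0) ++ [.qr 1] from rfl, ← rep_snoc]
    simp
  · refine Or.inr ⟨not_term (A := 1) (by simp [cA]), List.replicate t (.tm 1),
      List.replicate t (.tm 2), 1, [.tm 1, .nt 1, .tm 2], rfl, by simp, ?_⟩
    show cB (t+1) 1 = _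
    rw [show cB (t+1) 1 = List.replicate (t+1) (.tm 1) ++ .nt 1 ::
      List.replicate (t+1) (.tm 2) from rfl, ← rep_snoc]
    simp [List.replicate_succ]

lemma substB (n : ℕ) : PCGS.subst (cB n) (cB n 0) = cC n (cond b 0 n) 0 := by
  show PCGS.subst (cB n) (List.replicate n (PCSym.tm 0) ++ [PCSym.qr 1]) = _
  rw [subst_append, subst_rep, subst_qr]
  show List.replicate n (PCSym.tm 0) ++ (List.replicate n (PCSym.tm 1) ++ PCSym.nt 1 ::
    List.replicate n (PCSym.tm 2)) = List.replicate n (PCSym.tm 0) ++ List.replicate n (PCSym.tm 1)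
      ++ PCSym.nt 1 :: List.replicate n (PCSym.tm 2)
  rw [List.append_assoc]

lemma stepBC (b : Bool) (n : ℕ) : PCGS.Step b Γ (cB n) (cC n (cond b 0 n)) := by
  refine Or.inr ⟨⟨0, query_B0 n⟩, ?_⟩
  intro i
  fin_cases i
  · exact Or.inl ⟨answered_B0 n, (substB (b := b) n).symm⟩
  · cases b
    · refine Or.inr (Or.inr (Or.inr ⟨noquery_B1 n, Or.inl rfl, rfl⟩))
    · refine Or.inr (Or.inr (Or.inl ⟨noquery_B1 n, rfl, ⟨0, answered_B0 n, by simp [cB]⟩, rfl⟩))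

lemma stepCD (b : Bool) (n s : ℕ) : PCGS.Step b Γ (cC n s) (cD n (s + 1)) := by
  refine Or.inl ⟨noquery_C n s, ?_⟩
  intro i
  fin_cases i
  · refine Or.inr ⟨not_term (A := 1) (by simp [cC]),
      List.replicate n (.tm 0) ++ List.replicate n (.tm 1), List.replicate n (.tm 2), 1,
      [], rfl, by simp, by simp [cD]⟩
  · refine Or.inr ⟨not_term (A := 1) (by simp [cC]), List.replicate s (.tm 1),
      List.replicate s (.tm 2), 1, [.tm 1, .nt 1, .tm 2], rfl, by simp, ?_⟩
    show cD n (s+1) 1 = _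
    rw [show cD n (s+1) 1 = List.replicate (s+1) (.tm 1) ++ .nt 1 ::
      List.replicate (s+1) (.tm 2) from rfl, ← rep_snoc]
    simp [List.replicate_succ]

lemma init_eq : PCGS.initConfig Γ = cA 0 := fin2_ext rfl rfl

lemma reachA (b : Bool) (t : ℕ) :
    Relation.ReflTransGen (PCGS.Step b Γ) (PCGS.initConfig Γ) (cA t) := by
  induction t with
  | zero => rw [init_eq]
  | succ t ih => exact ih.tail (stepA b t)

lemma tm_inj : Function.Injective (PCSym.tm : Fin 3 → Sym) := by
  intro a b h
  cases h
  rfl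

theorem lang_eq (b : Bool) : PCGS.language b Γ =
    { w : List (Fin 3) | ∃ n : ℕ, 1 ≤ n ∧
      w = List.replicate n 0 ++ List.replicate n 1 ++ List.replicate n 2 } := by
  ext w
  constructor
  · rintro ⟨c, hreach, hmaster⟩
    have hinv : Inv c := by
      clear hmaster
      induction hreach with
      | refl => exact Or.inl ⟨0, init_eq⟩
      | tail _ hstep ih => exact inv_step ih hstep
    rw [master_eq] at hmaster
    have hnotmem : ∀ (x : Sym), (∀ a : Fin 3, x ≠ PCSym.tm a) → x ∈ c 0 → False := by
      intro x hx hmem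
      rw [hmaster] at hmem
      obtain ⟨a, _, ha⟩ := List.mem_map.mp hmem
      exact hx a ha.symm
    rcases hinv with ⟨t, rfl⟩ | ⟨n, hn, rfl⟩ | ⟨n, s, hn, rfl⟩ | ⟨n, s, hn, rfl⟩
    · exact absurd (hnotmem (.nt 0) (by intro a h; cases h) (by simp [cA])) (by simp)
    · exact absurd (hnotmem (.qr 1) (by intro a h; cases h) (by simp [cB])) (by simp)
    · exact absurd (hnotmem (.nt 1) (by intro a h; cases h) (by simp [cC])) (by simp)
    · refine ⟨n, hn, ?_⟩
      have : (List.replicate n (0 : Fin 3) ++ List.replicate n 1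
          ++ List.replicate n 2).map PCSym.tm = cD n s 0 := by
        simp [cD, List.map_replicate]
      apply List.map_injective_iff.mpr tm_inj
      rw [← hmaster, ← this]
  · rintro ⟨n, hn, rfl⟩
    obtain ⟨t, rfl⟩ : ∃ t, n = t + 1 := ⟨n - 1, by omega⟩
    refine ⟨cD (t+1) (cond b 0 (t+1) + 1), ?_, ?_⟩
    · exact (((reachA b t).tail (stepAB b t)).tail (stepBC b (t+1))).tail (stepCD b (t+1) _)
    · rw [master_eq]
      simp [cD, List.map_replicate]

end PCL3


namespace CFtoPC

variable {T : Type} (g : ContextFreeGrammar.{0} T)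

/-- The relevant (finitely many) nonterminals of `g`. -/
def S : Set g.NT :=
  insert g.initial (⋃ r ∈ g.rules, insert r.input {A | Symbol.nonterminal A ∈ r.output})

lemma initial_mem_S : g.initial ∈ S g := Set.mem_insert _ _

lemma input_mem_S {r : ContextFreeRule T g.NT} (hr : r ∈ g.rules) : r.input ∈ S g :=
  Set.mem_insert_iff.mpr (Or.inr (Set.mem_biUnion hr (Set.mem_insert _ _)))

lemma output_mem_S {r : ContextFreeRule T g.NT} (hr : r ∈ g.rules) {A : g.NT}
    (hA : Symbol.nonterminal A ∈ r.output) : A ∈ S g :=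
  Set.mem_insert_iff.mpr (Or.inr (Set.mem_biUnion hr (Set.mem_insert_iff.mpr (Or.inr hA))))

lemma S_finite : (S g).Finite := by
  refine Set.Finite.insert _ (Set.Finite.biUnion g.rules.finite_toSet ?_)
  intro r _
  refine Set.Finite.insert _ ?_
  refine Set.Finite.subset (r.output.filterMap fun s => match s with
    | Symbol.nonterminal A => some A
    | _ => none).finite_toSet ?_
  intro A hA
  simp only [List.coe_toFinset, Set.mem_setOf_eq, List.mem_filterMap] at *
  exact ⟨Symbol.nonterminal A, hA, rfl⟩

open Classical in
noncomputable def phiN (A : g.NT) : ↥(S g) :=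
  if h : A ∈ S g then ⟨A, h⟩ else ⟨g.initial, initial_mem_S g⟩

lemma phiN_val {A : g.NT} (h : A ∈ S g) : phiN g A = ⟨A, h⟩ := dif_pos h

noncomputable def phi : Symbol T g.NT → PCSym ↥(S g) T 1
  | Symbol.terminal a => PCSym.tm a
  | Symbol.nonterminal A => PCSym.nt (phiN g A)

def psi : PCSym ↥(S g) T 1 → Symbol T g.NT
  | PCSym.tm a => Symbol.terminal a
  | PCSym.nt A => Symbol.nonterminal A.val
  | PCSym.qr _ => Symbol.nonterminal g.initial

/-- The one-component PC grammar system simulating `g`. -/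
noncomputable def Δ : PCGS ↥(S g) T 1 where
  comp := fun _ => ⟨g.rules.toList.map fun r => (phiN g r.input, r.output.map (phi g)),
    phiN g g.initial⟩
  master := 0

lemma psi_phi {s : Symbol T g.NT} (h : ∀ A, s = Symbol.nonterminal A → A ∈ S g) :
    psi g (phi g s) = s := by
  cases s with
  | terminal a => rfl
  | nonterminal A =>
    have hA : A ∈ S g := h A rfl
    rw [phi, psi, phiN_val g hA]

lemma phiN_start : (Δ g).comp 0 = ⟨g.rules.toList.map fun r =>
    (phiN g r.input, r.output.map (phi g)), phiN g g.initial⟩ := rfl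

lemma no_query_map (x : List (Symbol T g.NT)) : ¬ PCGS.hasQuery (x.map (phi g)) := by
  rintro ⟨i, hi⟩
  obtain ⟨s, _, hs⟩ := List.mem_map.mp hi
  cases s <;> simp [phi] at hs

lemma not_terminal_map {x : List (Symbol T g.NT)} {A : g.NT}
    (hA : Symbol.nonterminal A ∈ x) : ¬ PCGS.isTerminalWord (x.map (phi g)) := by
  intro h
  obtain ⟨a, ha⟩ := h (PCSym.nt (phiN g A)) (List.mem_map.mpr ⟨_, hA, rfl⟩)
  cases ha

lemma produces_sim {u v : List (Symbol T g.NT)} (h : g.Produces u v) :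
    PCGS.Rewrite ((Δ g).comp 0) (u.map (phi g)) (v.map (phi g)) := by
  obtain ⟨r, hr, hrw⟩ := h
  obtain ⟨p, q, rfl, rfl⟩ := hrw.exists_parts
  refine ⟨p.map (phi g), q.map (phi g), phiN g r.input, r.output.map (phi g), ?_, ?_, ?_⟩
  · simp [phi]
  · exact List.mem_map.mpr ⟨r, (Finset.mem_toList).mpr hr, rfl⟩
  · simp

lemma derives_sim (b : Bool) {u v : List (Symbol T g.NT)} (h : g.Derives u v) :
    Relation.ReflTransGen (PCGS.Step b (Δ g))
      (fun _ => u.map (phi g)) (fun _ => v.map (phi g)) := by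
  induction h with
  | refl => exact Relation.ReflTransGen.refl
  | tail _ hstep ih =>
    rename_i y z _
    refine ih.tail (Or.inl ⟨fun _ => no_query_map g y, ?_⟩)
    intro i
    refine Or.inr ⟨?_, produces_sim g hstep⟩
    obtain ⟨r, _, hrw⟩ := hstep
    obtain ⟨p, q, rfl, _⟩ := hrw.exists_parts
    exact not_terminal_map g (A := r.input) (by simp)

/-- Invariant for the reverse inclusion. -/
def Inv2 (b : Bool) (c : Fin 1 → List (PCSym ↥(S g) T 1)) : Prop :=
  ∃ x : List (Symbol T g.NT), c = (fun _ => x.map (phi g)) ∧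
    (∀ A, Symbol.nonterminal A ∈ x → A ∈ S g) ∧
    g.Derives [Symbol.nonterminal g.initial] x

lemma inv2_step {b : Bool} {c c' : Fin 1 → List (PCSym ↥(S g) T 1)}
    (h : Inv2 g b c) (hs : PCGS.Step b (Δ g) c c') : Inv2 g b c' := by
  obtain ⟨x, rfl, hS, hder⟩ := h
  rcases hs with ⟨_, hrw⟩ | ⟨⟨i, hq⟩, _⟩
  · have hc' : c' = fun _ => c' 0 := by
      funext i
      rw [Subsingleton.elim i 0]
    rcases hrw 0 with ⟨_, heq⟩ | ⟨_, hrew⟩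
    · exact ⟨x, by rw [hc', heq], hS, hder⟩
    · obtain ⟨u, v, A, wl, heq, hrule, hy⟩ := hrew
      obtain ⟨r, hrmem, hreq⟩ := List.mem_map.mp hrule
      rw [Finset.mem_toList] at hrmem
      have hA : A = phiN g r.input := (Prod.mk.injEq _ _ _ _ ▸ hreq.symm).1
      have hwl : wl = r.output.map (phi g) := (Prod.mk.injEq _ _ _ _ ▸ hreq.symm).2
      -- split x according to heq
      obtain ⟨x₁, x₂₃, rfl, hm1, hm23⟩ := List.map_eq_append_iff.mp heq
      rcases x₂₃ with _ | ⟨s, x₃⟩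
      · simp at hm23
      simp only [List.map_cons, List.cons.injEq] at hm23
      obtain ⟨hs, hm3⟩ := hm23
      cases s with
      | terminal a => simp [phi] at hs
      | nonterminal A₀ =>
        have hA₀S : A₀ ∈ S g := hS A₀ (by simp)
        have hA₀ : A₀ = r.input := by
          have h1 : phiN g A₀ = phiN g r.input := by
            simp only [phi] at hs
            rw [← hA]
            exact (PCSym.nt.injEq _ _ ▸ hs)
          have h2 : (phiN g A₀).val = A₀ := by rw [phiN_val g hA₀S]
          have h3 : (phiN g r.input).val = r.input := by
            rw [phiN_val g (input_mem_S g hrmem)]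
          rw [← h2, h1, h3]
        refine ⟨x₁ ++ r.output ++ x₃, ?_, ?_, ?_⟩
        · funext i
          rw [Subsingleton.elim i 0, hy, ← hm1, ← hm3, hwl]
          simp
        · intro B hB
          simp only [List.append_assoc, List.mem_append] at hB
          rcases hB with hB | hB | hB
          · exact hS B (by simp [hB])
          · exact output_mem_S g hrmem hB
          · exact hS B (by simp [hB])
        · refine hder.trans_produces ⟨r, hrmem, ?_⟩
          rw [hA₀]
          have := ContextFreeRule.rewrites_of_exists_parts r x₁ x₃
          simpa using this
  · exact absurd hq (no_query_map g x)

lemma psi_map {x : List (Symbol T g.NT)} (hS : ∀ A, Symbol.nonterminal A ∈ x → A ∈ S g) :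
    (x.map (phi g)).map (psi g) = x := by
  induction x with
  | nil => rfl
  | cons s xs ih =>
    simp only [List.map_cons, List.cons.injEq]
    constructor
    · exact psi_phi g (fun A hA => hS A (by rw [← hA]; exact List.mem_cons_self))
    · exact ih (fun A hA => hS A (List.mem_cons_of_mem _ hA))

lemma map_phi_eq_tm {x : List (Symbol T g.NT)} {w : List T}
    (hS : ∀ A, Symbol.nonterminal A ∈ x → A ∈ S g)
    (h : x.map (phi g) = w.map PCSym.tm) : x = w.map Symbol.terminal := by
  rw [← psi_map g hS, h, List.map_map]
  rfl

theorem lang_sim (b : Bool) : PCGS.language b (Δ g) = g.language := by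
  ext w
  constructor
  · rintro ⟨c, hreach, hmaster⟩
    have hinv : Inv2 g b c := by
      clear hmaster
      induction hreach with
      | refl =>
        refine ⟨[Symbol.nonterminal g.initial], rfl, ?_, Relation.ReflTransGen.refl⟩
        intro A hA
        rw [List.mem_singleton] at hA
        cases hA
        exact initial_mem_S g
      | tail _ hstep ih => exact inv2_step g ih hstep
    obtain ⟨x, rfl, hS, hder⟩ := hinv
    have hx : x = w.map Symbol.terminal := map_phi_eq_tm g hS hmaster
    rw [ContextFreeGrammar.mem_language_iff, ← hx]
    exact hder
  · intro hw
    rw [ContextFreeGrammar.mem_language_iff] at hw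
    refine ⟨fun _ => (w.map Symbol.terminal).map (phi g), ?_, ?_⟩
    · exact derives_sim g b hw
    · show (w.map Symbol.terminal).map (phi g) = w.map PCSym.tm
      rw [List.map_map]
      rfl

theorem cf_subset_pc (b : Bool) {L : Language T} (hL : L.IsContextFree) :
    ∃ (k : ℕ) (_ : k ≤ 2) (N : Type) (_ : Finite N) (Γ : PCGS N T k),
      PCGS.language b Γ = L := by
  obtain ⟨g, rfl⟩ := hL
  exact ⟨1, by omega, ↥(S g), (S_finite g).to_subtype, Δ g, lang_sim g b⟩

end CFtoPC


/-- The class of context-free languages is strictly contained in the class of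
languages generated by (returning or non-returning) PC grammar systems with two
context-free components: `L(CF) ⊊ L(X₂ CF)` for `X ∈ {PC, NPC}`. -/
theorem cf_ssubset_pc2 :
    (∀ T : Type, { L : Language T | L.IsContextFree } ⊆ NPCLang 2 T ∧
                 { L : Language T | L.IsContextFree } ⊆ PCLangR 2 T) ∧
    (∃ (T : Type) (_ : Finite T),
      { L : Language T | L.IsContextFree } ⊂ NPCLang 2 T ∧
      { L : Language T | L.IsContextFree } ⊂ PCLangR 2 T) := by
  constructor
  · intro T
    exact ⟨fun L hL => CFtoPC.cf_subset_pc false hL, fun L hL => CFtoPC.cf_subset_pc true hL⟩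
  · refine ⟨Fin 3, inferInstance, ?_, ?_⟩
    · refine ⟨fun L hL => CFtoPC.cf_subset_pc false hL, fun hsub => ?_⟩
      have hmem : L3sec.L3 ∈ NPCLang 2 (Fin 3) :=
        ⟨2, le_refl 2, Fin 2, inferInstance, PCL3.Γ, PCL3.lang_eq false⟩
      exact L3sec.L3_not_contextFree (hsub hmem)
    · refine ⟨fun L hL => CFtoPC.cf_subset_pc true hL, fun hsub => ?_⟩
      have hmem : L3sec.L3 ∈ PCLangR 2 (Fin 3) :=
        ⟨2, le_refl 2, Fin 2, inferInstance, PCL3.Γ, PCL3.lang_eq true⟩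
      exact L3sec.L3_not_contextFree (hsub hmem)
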